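/- Let G be a finite group and let U_1, ..., U_n, V be subgroups of G with [G:U_i] = a_i·r_i for 1 ≤ i ≤ n and [G:V] = a·r, where r_1, ..., r_n, r are pairwise coprime positive integers and a_1, ..., a_n, a are positive integers. Assume that the sum over i of 1/a_i is at least 1, and that for each 1 ≤ i ≤ n: a_i divides a, gcd(a/a_i, r_i) = 1, and α(U_i, V) = 1. Then the tuple (U_1, ..., U_n, V) is not harmonic; i.e. there do not exist g_1, ..., g_n, g_v ∈ G such that the cosets g_1U_1, ..., g_nU_n, g_vV are pairwise disjoint. -/

import Mathlib

open scoped Pointwise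

/-- `alphaIdx A B` is the integer `α(A,B)` satisfying
`[G : A ⊓ B] = lcm([G:A],[G:B]) · α(A,B)`. -/
noncomputable def alphaIdx {G : Type*} [Group G] (A B : Subgroup G) : ℕ :=
  (A ⊓ B).index / Nat.lcm A.index B.index

/-- In a finite group, if two subgroups have coprime indices, then every element
is a product of an element of the first with an element of the second. -/
private lemma exists_mul_of_coprime_index {K : Type*} [Group K] [Finite K]
    {A B : Subgroup K} (h : Nat.Coprime A.index B.index) (k : K) :
    ∃ x ∈ A, ∃ y ∈ B, k = x * y := by
  classical
  have hA : A.index ∣ (A ⊓ B).index := Subgroup.index_dvd_of_le inf_le_left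
  have hB : B.index ∣ (A ⊓ B).index := Subgroup.index_dvd_of_le inf_le_right
  have hdvd : A.index * B.index ∣ (A ⊓ B).index := h.mul_dvd_of_dvd_of_dvd hA hB
  have hpos : 0 < (A ⊓ B).index :=
    Nat.pos_of_ne_zero Subgroup.index_ne_zero_of_finite
  have hcard : (A ⊓ B).index = A.index * B.index :=
    Nat.le_antisymm Subgroup.index_inf_le (Nat.le_of_dvd hpos hdvd)
  set f : K ⧸ (A ⊓ B) → (K ⧸ A) × (K ⧸ B) := fun q =>
    (Subgroup.quotientMapOfLE inf_le_left q, Subgroup.quotientMapOfLE inf_le_right q) with hf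
  have hinj : Function.Injective f := by
    refine Quotient.ind₂' ?_
    intro x y hxy
    simp only [hf, Subgroup.quotientMapOfLE, Quotient.map'_mk'', Prod.mk.injEq] at hxy
    obtain ⟨h1, h2⟩ := hxy
    have h1' : x⁻¹ * y ∈ A := QuotientGroup.eq.mp h1
    have h2' : x⁻¹ * y ∈ B := QuotientGroup.eq.mp h2
    exact QuotientGroup.eq.mpr ⟨h1', h2'⟩
  have hcards : Nat.card (K ⧸ (A ⊓ B)) = Nat.card ((K ⧸ A) × (K ⧸ B)) := by
    rw [Nat.card_prod, ← Subgroup.index_eq_card, ← Subgroup.index_eq_card,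
      ← Subgroup.index_eq_card, hcard]
  have hsurj : Function.Surjective f :=
    ((Nat.bijective_iff_injective_and_card f).mpr ⟨hinj, hcards⟩).2
  obtain ⟨z, hz⟩ := hsurj (QuotientGroup.mk (1 : K), QuotientGroup.mk k)
  obtain ⟨w, rfl⟩ := Quotient.exists_rep z
  have hz1 : (QuotientGroup.mk w : K ⧸ A) = QuotientGroup.mk (1 : K) :=
    congrArg Prod.fst hz
  have hz2 : (QuotientGroup.mk w : K ⧸ B) = QuotientGroup.mk k :=
    congrArg Prod.snd hz
  have hwA : w ∈ A := by
    have := QuotientGroup.eq.mp hz1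
    simpa using A.inv_mem_iff.mp (by simpa using this)
  have hwB : w⁻¹ * k ∈ B := QuotientGroup.eq.mp hz2
  exact ⟨w, hwA, w⁻¹ * k, hwB, by group⟩

theorem not_harmonic_of_sum_of_reciprocals
    (G : Type*) [Group G] [Fintype G]
    (n : ℕ) (U : Fin n → Subgroup G) (V : Subgroup G)
    (a : ℕ) (r : ℕ) (ai ri : Fin n → ℕ)
    (hapos : 0 < a) (hrpos : 0 < r)
    (haipos : ∀ i, 0 < ai i) (hripos : ∀ i, 0 < ri i)
    (hUidx : ∀ i, (U i).index = ai i * ri i) (hVidx : V.index = a * r)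
    (hcop : ∀ i j : Fin n, i ≠ j → Nat.Coprime (ri i) (ri j))
    (hcopr : ∀ i, Nat.Coprime (ri i) r)
    (hsum : 1 ≤ ∑ i : Fin n, (1 : ℚ) / (ai i))
    (hdvd : ∀ i, ai i ∣ a)
    (hgcd : ∀ i, Nat.Coprime (a / ai i) (ri i))
    (halpha : ∀ i, alphaIdx (U i) V = 1) :
    ¬ ∃ (g : Fin n → G) (gv : G),
      (∀ i j : Fin n, i ≠ j →
        Disjoint (g i • (U i : Set G)) (g j • (U j : Set G))) ∧
      (∀ i : Fin n, Disjoint (g i • (U i : Set G)) (gv • (V : Set G))) := by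
  classical
  rintro ⟨g, gv, hUU, hUV⟩
  have hne : ∀ (H : Subgroup G), H.index ≠ 0 := fun H => Subgroup.index_ne_zero_of_finite
  -- index of the intersections
  have hWidx : ∀ i, (U i ⊓ V).index = a * r * ri i := by
    intro i
    have hb : ai i * (a / ai i) = a := Nat.mul_div_cancel' (hdvd i)
    have hcop' : Nat.Coprime (ri i) (a / ai i * r) :=
      Nat.Coprime.mul_right (hgcd i).symm (hcopr i)
    have hgcd' : Nat.gcd (ai i * ri i) (a * r) = ai i := by
      have h1 : a * r = ai i * (a / ai i * r) := by rw [← mul_assoc, hb]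
      rw [h1, Nat.gcd_mul_left, hcop', mul_one]
    have hlcm : Nat.lcm ((U i).index) V.index = a * r * ri i := by
      rw [hUidx i, hVidx, Nat.lcm, hgcd']
      have h2 : ai i * ri i * (a * r) = ai i * (ri i * (a * r)) := by ring
      rw [h2, Nat.mul_div_cancel_left _ (haipos i)]
      ring
    have hdvdl : Nat.lcm ((U i).index) V.index ∣ (U i ⊓ V).index :=
      Nat.lcm_dvd (Subgroup.index_dvd_of_le inf_le_left)
        (Subgroup.index_dvd_of_le inf_le_right)
    have hlpos : 0 < Nat.lcm ((U i).index) V.index :=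
      Nat.pos_of_ne_zero (Nat.lcm_ne_zero (hne _) (hne _))
    have h1 := halpha i
    unfold alphaIdx at h1
    obtain ⟨c, hc⟩ := hdvdl
    rw [hc, Nat.mul_div_cancel_left _ hlpos] at h1
    rw [hc, h1, mul_one, hlcm]
  -- relative index of `U i ⊓ V` in `V` is `ri i`
  have hrel : ∀ i, (U i ⊓ V).relIndex V = ri i := by
    intro i
    have h := Subgroup.relIndex_mul_index (inf_le_right : U i ⊓ V ≤ V)
    rw [hVidx, hWidx i] at h
    have har : 0 < a * r := Nat.mul_pos hapos hrpos
    exact Nat.eq_of_mul_eq_mul_right har (h.trans (by ring))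
  haveI : Fintype (G ⧸ V) := Fintype.ofFinite _
  set S : Fin n → Finset G := fun i => (g i • (U i : Set G)).toFinset with hS
  set T : Fin n → Finset (G ⧸ V) := fun i => (S i).image (QuotientGroup.mk : G → G ⧸ V) with hT
  have hmemS : ∀ i x, x ∈ S i ↔ (g i)⁻¹ * x ∈ U i := by
    intro i x
    show x ∈ (g i • (U i : Set G)).toFinset ↔ _
    rw [Set.mem_toFinset, Set.mem_smul_set_iff_inv_smul_mem, smul_eq_mul, SetLike.mem_coe]
  -- the images `T i` are pairwise disjoint
  have hTdisj : ∀ i j, i ≠ j → Disjoint (T i) (T j) := by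
    intro i j hij
    rw [Finset.disjoint_left]
    rintro q hqi hqj
    obtain ⟨si, hsi, rfl⟩ := Finset.mem_image.mp hqi
    obtain ⟨sj, hsj, hq⟩ := Finset.mem_image.mp hqj
    have hv : si⁻¹ * sj ∈ V := QuotientGroup.eq.mp hq.symm
    have hcop' : Nat.Coprime (((U i ⊓ V).subgroupOf V).index)
        (((U j ⊓ V).subgroupOf V).index) := by
      have e1 : ((U i ⊓ V).subgroupOf V).index = ri i := hrel i
      have e2 : ((U j ⊓ V).subgroupOf V).index = ri j := hrel j
      rw [e1, e2]; exact hcop i j hij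
    obtain ⟨x, hx, y, hy, hxy⟩ := exists_mul_of_coprime_index hcop' (⟨si⁻¹ * sj, hv⟩ : V)
    have hxU : (x : G) ∈ U i := (Subgroup.mem_subgroupOf.mp hx).1
    have hyU : (y : G) ∈ U j := (Subgroup.mem_subgroupOf.mp hy).1
    have hveq : si⁻¹ * sj = (x : G) * (y : G) := congrArg Subtype.val hxy
    have hkey : si * (x : G) = sj * (y : G)⁻¹ := by
      have : sj = si * ((x : G) * (y : G)) := by
        rw [← hveq]; group
      rw [this]; group
    have hmi : si * (x : G) ∈ g i • (U i : Set G) := by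
      rw [← Set.mem_toFinset]
      rw [hmemS i]
      rw [← mul_assoc]
      exact (U i).mul_mem ((hmemS i si).mp hsi) hxU
    have hmj : si * (x : G) ∈ g j • (U j : Set G) := by
      rw [hkey, ← Set.mem_toFinset, hmemS j, ← mul_assoc]
      exact (U j).mul_mem ((hmemS j sj).mp hsj) ((U j).inv_mem hyU)
    exact Set.disjoint_left.mp (hUU i j hij) hmi hmj
  -- the coset of `gv` is avoided
  have hTgv : ∀ i, (QuotientGroup.mk gv : G ⧸ V) ∉ T i := by
    intro i hq
    obtain ⟨s, hs, hmk⟩ := Finset.mem_image.mp hq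
    have hv : gv⁻¹ * s ∈ V := QuotientGroup.eq.mp hmk.symm
    have hsv : s ∈ gv • (V : Set G) := by
      rw [Set.mem_smul_set_iff_inv_smul_mem, smul_eq_mul]; exact hv
    exact Set.disjoint_left.mp (hUV i) (Set.mem_toFinset.mp hs) hsv
  -- lower bound on the cardinality of `T i`
  have hTcard : ∀ i, a / ai i * r ≤ (T i).card := by
    intro i
    set W : Subgroup G := U i ⊓ V with hW
    have hfib : ∀ q ∈ (S i).image (QuotientGroup.mk : G → G ⧸ V),
        ((S i).filter (fun x => (QuotientGroup.mk x : G ⧸ V) = q)).card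
          ≤ ((W : Set G)).toFinset.card := by
      intro q hq
      obtain ⟨s, hs, rfl⟩ := Finset.mem_image.mp hq
      refine Finset.card_le_card_of_injOn (fun x => s⁻¹ * x) ?_ ?_
      · intro x hx
        obtain ⟨hx1, hx2⟩ := Finset.mem_filter.mp hx
        have hxV : s⁻¹ * x ∈ V := QuotientGroup.eq.mp hx2.symm
        have hxU : s⁻¹ * x ∈ U i := by
          have h1 := (hmemS i s).mp hs
          have h2 := (hmemS i x).mp hx1
          have : s⁻¹ * x = ((g i)⁻¹ * s)⁻¹ * ((g i)⁻¹ * x) := by group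
          rw [this]; exact (U i).mul_mem ((U i).inv_mem h1) h2
        simp only [Set.mem_toFinset]
        exact Set.mem_toFinset.mpr (Subgroup.mem_inf.mpr ⟨hxU, hxV⟩)
      · intro x _ y _ hxy
        exact mul_left_cancel hxy
    have hcount : (S i).card ≤ ((W : Set G)).toFinset.card * (T i).card := by
      rw [hT]
      exact Finset.card_le_mul_card_image (S i) _ hfib
    have hScard : (S i).card = Nat.card (U i) := by
      rw [hS]
      rw [← Set.ncard_eq_toFinset_card', Set.ncard_smul_set, ← Nat.card_coe_set_eq]
      simp
    have hWcard : ((W : Set G)).toFinset.card = Nat.card W := by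
      rw [← Set.ncard_eq_toFinset_card', ← Nat.card_coe_set_eq]
      simp
    have hG1 : Nat.card (U i) * ((ai i) * ri i) = Nat.card G := by
      rw [← hUidx i]; exact Subgroup.card_mul_index (U i)
    have hG2 : Nat.card W * (a * r * ri i) = Nat.card G := by
      rw [← hWidx i]; exact Subgroup.card_mul_index W
    have hWpos : 0 < Nat.card W := Nat.card_pos
    have key : Nat.card W * (a * r * ri i) ≤ Nat.card W * ((T i).card * (ai i * ri i)) := by
      calc Nat.card W * (a * r * ri i) = Nat.card G := hG2
        _ = Nat.card (U i) * (ai i * ri i) := hG1.symm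
        _ = (S i).card * (ai i * ri i) := by rw [hScard]
        _ ≤ (((W : Set G)).toFinset.card * (T i).card) * (ai i * ri i) :=
            Nat.mul_le_mul_right _ hcount
        _ = Nat.card W * ((T i).card * (ai i * ri i)) := by rw [hWcard]; ring
    have key2 : a * r * ri i ≤ (T i).card * (ai i * ri i) :=
      Nat.le_of_mul_le_mul_left key hWpos
    have key3 : a * r ≤ (T i).card * ai i := by
      have h1 : (a * r) * ri i ≤ ((T i).card * ai i) * ri i := by
        calc (a * r) * ri i = a * r * ri i := by ring
          _ ≤ (T i).card * (ai i * ri i) := key2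
          _ = ((T i).card * ai i) * ri i := by ring
      exact Nat.le_of_mul_le_mul_right h1 (hripos i)
    have h4 : (a / ai i * r) * ai i = a * r := by
      rw [mul_comm (a / ai i) r, mul_assoc, Nat.div_mul_cancel (hdvd i)]; ring
    have h5 : (a / ai i * r) * ai i ≤ (T i).card * ai i := by rw [h4]; exact key3
    exact Nat.le_of_mul_le_mul_right h5 (haipos i)
  -- sum over all i
  have hsum' : a * r ≤ ∑ i, a / ai i * r := by
    have hcast : ∀ i : Fin n, ((a / ai i * r : ℕ) : ℚ) = (a * r : ℚ) * (1 / (ai i : ℚ)) := by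
      intro i
      have h0 : (ai i : ℚ) ≠ 0 := Nat.cast_ne_zero.mpr (haipos i).ne'
      rw [Nat.cast_mul, Nat.cast_div (hdvd i) h0]
      field_simp
    have hq : ((a * r : ℕ) : ℚ) ≤ ((∑ i, a / ai i * r : ℕ) : ℚ) := by
      push_cast
      calc (a : ℚ) * r = (a * r : ℚ) * 1 := by ring
        _ ≤ (a * r : ℚ) * ∑ i, 1 / (ai i : ℚ) := by
            apply mul_le_mul_of_nonneg_left hsum
            positivity
        _ = ∑ i, (a * r : ℚ) * (1 / (ai i : ℚ)) := Finset.mul_sum _ _ _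
        _ = ∑ i : Fin n, ((a / ai i * r : ℕ) : ℚ) :=
            Finset.sum_congr rfl fun i _ => (hcast i).symm
        _ = ∑ i : Fin n, ((a / ai i : ℕ) : ℚ) * (r : ℚ) := by push_cast; ring
    exact_mod_cast hq
  have hbi : ∑ i, (T i).card = (Finset.univ.biUnion T).card :=
    (Finset.card_biUnion (fun i _ j _ hij => hTdisj i j hij)).symm
  have hsub : Finset.univ.biUnion T ⊆ Finset.univ.erase (QuotientGroup.mk gv) := by
    intro q hq
    obtain ⟨i, _, hqi⟩ := Finset.mem_biUnion.mp hq
    exact Finset.mem_erase.mpr ⟨fun h => hTgv i (h ▸ hqi), Finset.mem_univ _⟩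
  have hcard_univ : (Finset.univ : Finset (G ⧸ V)).card = a * r := by
    rw [Finset.card_univ, ← Nat.card_eq_fintype_card, ← Subgroup.index_eq_card, hVidx]
  have hfinal : a * r ≤ a * r - 1 := by
    calc a * r ≤ ∑ i, a / ai i * r := hsum'
      _ ≤ ∑ i, (T i).card := Finset.sum_le_sum (fun i _ => hTcard i)
      _ = (Finset.univ.biUnion T).card := hbi
      _ ≤ (Finset.univ.erase (QuotientGroup.mk gv : G ⧸ V)).card := Finset.card_le_card hsub
      _ = a * r - 1 := by rw [Finset.card_erase_of_mem (Finset.mem_univ _), hcard_univ]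
  have : 0 < a * r := Nat.mul_pos hapos hrpos
  omega
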